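/- Let L ⊆ 𝔽₂ⁿ be a subspace and t ∈ ℝ. Then the real-time partition function of the perpendicular-complement model satisfies Σ_{B ∈ L^⊥} exp(−i·t·‖B‖) = (1/|L|) · (2·exp(−i·t/2))ⁿ · Σ_{A ∈ L} (cos(t/2))^{n−‖A‖} · (i·sin(t/2))^{‖A‖}, as an identity of complex numbers. (Real-time generalized Wegner duality, Eq. (Wegner2): the dual sum runs over A ∈ L with cosine factors for the complement of the support of A and sine factors for the support of A.) -/

import Mathlib

open Finset

/-- Hamming weight of a binary vector. -/
def wt {n : ℕ} (v : Fin n → ZMod 2) : ℕ :=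
  (Finset.univ.filter (fun i => v i = 1)).card

noncomputable def chi (x : ZMod 2) : ℂ := (-1 : ℂ) ^ x.val
lemma chi_zero : chi 0 = 1 := by norm_num [chi]
lemma chi_one : chi 1 = -1 := by
  have : (1 : ZMod 2).val = 1 := rfl
  rw [chi, this]; norm_num
lemma chi_add (x y : ZMod 2) : chi (x + y) = chi x * chi y := by
  rcases (by decide : ∀ x : ZMod 2, x = 0 ∨ x = 1) x with rfl | rfl <;>
    rcases (by decide : ∀ x : ZMod 2, x = 0 ∨ x = 1) y with rfl | rfl <;>
    simp [show (1:ZMod 2)+1 = 0 from by decide, show (2:ZMod 2) = 0 from by decide, chi_zero, chi_one]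

open scoped Classical in
lemma chi_dotsum {n : ℕ} (A B : Fin n → ZMod 2) :
    chi (∑ i, A i * B i) = ∏ i, chi (A i * B i) := by
  induction (univ : Finset (Fin n)) using Finset.induction with
  | empty => simp [chi_zero]
  | insert _ _ h ih => rw [Finset.sum_insert h, Finset.prod_insert h, chi_add, ih]

lemma sum_zmod2 (f : ZMod 2 → ℂ) : ∑ b : ZMod 2, f b = f 0 + f 1 := by
  have h : (univ : Finset (ZMod 2)) = {0, 1} := by decide
  rw [h, Finset.sum_insert (by decide), Finset.sum_singleton]

open scoped Classical in
lemma exp_pow_wt {n : ℕ} (t : ℝ) (B : Fin n → ZMod 2) :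
    Complex.exp (-Complex.I * t) ^ (wt B) = ∏ i, (if B i = 1 then Complex.exp (-Complex.I * t) else 1) := by
  rw [Finset.prod_ite, Finset.prod_const, Finset.prod_const, one_pow, mul_one, wt]

-- trig identities
lemma euler_cos (t : ℝ) :
    1 + Complex.exp (-Complex.I * t) =
      2 * Complex.exp (-Complex.I * t / 2) * (Real.cos (t/2) : ℂ) := by
  have h1 : -Complex.I * (t:ℂ) = ((-t : ℝ) : ℂ) * Complex.I := by push_cast; ring
  have h2 : -Complex.I * (t:ℂ) / 2 = ((-(t/2) : ℝ) : ℂ) * Complex.I := by push_cast; ring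
  rw [h2, h1, Complex.exp_mul_I, Complex.exp_mul_I]
  rw [← Complex.ofReal_cos, ← Complex.ofReal_sin, ← Complex.ofReal_cos, ← Complex.ofReal_sin]
  rw [Real.cos_neg, Real.sin_neg, Real.cos_neg, Real.sin_neg]
  have hc : Real.cos t = 2 * Real.cos (t/2)^2 - 1 := by
    rw [show t = 2*(t/2) by ring, Real.cos_two_mul]; ring_nf
  have hs : Real.sin t = 2 * Real.sin (t/2) * Real.cos (t/2) := by
    rw [show t = 2*(t/2) by ring, Real.sin_two_mul]; ring_nf
  rw [hc, hs]
  push_cast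
  ring

lemma euler_sin (t : ℝ) :
    1 - Complex.exp (-Complex.I * t) =
      2 * Complex.exp (-Complex.I * t / 2) * (Complex.I * (Real.sin (t/2) : ℂ)) := by
  have h1 : -Complex.I * (t:ℂ) = ((-t : ℝ) : ℂ) * Complex.I := by push_cast; ring
  have h2 : -Complex.I * (t:ℂ) / 2 = ((-(t/2) : ℝ) : ℂ) * Complex.I := by push_cast; ring
  rw [h2, h1, Complex.exp_mul_I, Complex.exp_mul_I]
  rw [← Complex.ofReal_cos, ← Complex.ofReal_sin, ← Complex.ofReal_cos, ← Complex.ofReal_sin]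
  rw [Real.cos_neg, Real.sin_neg, Real.cos_neg, Real.sin_neg]
  have hc : Real.cos t = 2 * Real.cos (t/2)^2 - 1 := by
    rw [show t = 2*(t/2) by ring, Real.cos_two_mul]; ring_nf
  have hs : Real.sin t = 2 * Real.sin (t/2) * Real.cos (t/2) := by
    rw [show t = 2*(t/2) by ring, Real.sin_two_mul]; ring_nf
  have hpy : (Real.cos (t/2) : ℂ)^2 + (Real.sin (t/2) : ℂ)^2 = 1 := by
    norm_cast
    rw [add_comm]
    exact Real.sin_sq_add_cos_sq (t/2)
  have hcC : (Real.cos t : ℂ) = 2*(Real.cos (t/2) : ℂ)^2 - 1 := by exact_mod_cast congrArg (Complex.ofReal) hc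
  have hsC : (Real.sin t : ℂ) = 2*(Real.sin (t/2) : ℂ)*(Real.cos (t/2) : ℂ) := by exact_mod_cast congrArg (Complex.ofReal) hs
  rw [Complex.ofReal_neg, Complex.ofReal_neg, hcC, hsC]
  linear_combination 2*(Real.sin (t/2):ℂ)^2 * Complex.I_sq - 2 * hpy

open scoped Classical in
lemma innerSumEval {n : ℕ} (A : Fin n → ZMod 2) (t : ℝ) :
    ∑ B : Fin n → ZMod 2, chi (∑ i, A i * B i) * Complex.exp (-Complex.I * t) ^ (wt B)
      = (2 * Complex.exp (-Complex.I * t / 2)) ^ n *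
          ((Real.cos (t / 2) : ℂ) ^ (n - wt A) * (Complex.I * (Real.sin (t / 2) : ℂ)) ^ wt A) := by
  have step1 : ∀ B : Fin n → ZMod 2,
      chi (∑ i, A i * B i) * Complex.exp (-Complex.I * t) ^ (wt B)
        = ∏ i, (chi (A i * B i) * (if B i = 1 then Complex.exp (-Complex.I * t) else 1)) := by
    intro B
    rw [chi_dotsum, exp_pow_wt, Finset.prod_mul_distrib]
  rw [Finset.sum_congr rfl (fun B _ => step1 B)]
  have step2 : ∑ B : Fin n → ZMod 2,
      ∏ i, (chi (A i * B i) * (if B i = 1 then Complex.exp (-Complex.I * t) else 1))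
      = ∏ i, ∑ b : ZMod 2, (chi (A i * b) * (if b = 1 then Complex.exp (-Complex.I * t) else 1)) := by
    rw [Finset.prod_univ_sum]
    rw [Fintype.piFinset_univ]
  rw [step2]
  have step3 : ∀ i, (∑ b : ZMod 2, (chi (A i * b) * (if b = 1 then Complex.exp (-Complex.I * t) else 1)))
      = 2 * Complex.exp (-Complex.I * t / 2) *
          (if A i = 1 then Complex.I * (Real.sin (t / 2) : ℂ) else (Real.cos (t / 2) : ℂ)) := by
    intro i
    rw [sum_zmod2]
    rcases (by decide : ∀ x : ZMod 2, x = 0 ∨ x = 1) (A i) with h | h <;> rw [h] <;>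
      simp only [mul_zero, mul_one, chi_zero, chi_one, one_mul, reduceIte,
        if_neg (show ¬(0:ZMod 2)=1 by decide), if_pos (rfl : (1:ZMod 2) = 1)]
    · exact euler_cos t
    · linear_combination euler_sin t
  rw [Finset.prod_congr rfl (fun i _ => step3 i), Finset.prod_mul_distrib, Finset.prod_const]
  congr 1
  · simp
  rw [Finset.prod_ite, Finset.prod_const, Finset.prod_const]
  have hcard : (univ.filter (fun i => ¬ A i = 1)).card = n - wt A := by
    have := Finset.card_filter_add_card_filter_not (s := (univ : Finset (Fin n)))
      (p := fun i => A i = 1)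
    simp only [Finset.card_univ, Fintype.card_fin] at this
    unfold wt
    omega
  rw [hcard, wt, mul_comm]
open scoped Classical in
lemma char_orth {n : ℕ} (L : Submodule (ZMod 2) (Fin n → ZMod 2)) (B : Fin n → ZMod 2) :
    ∑ A ∈ univ.filter (fun A => A ∈ L), chi (∑ i, A i * B i)
      = if (∀ A ∈ L, ∑ i, A i * B i = 0) then (Nat.card L : ℂ) else 0 := by
  by_cases h : ∀ A ∈ L, ∑ i, A i * B i = 0
  · rw [if_pos h]
    rw [Finset.sum_congr rfl (fun A hA => by
      rw [h A (by simpa using hA), chi_zero])]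
    simp [Nat.card_eq_fintype_card, Fintype.card_subtype]
  · rw [if_neg h]
    push_neg at h
    obtain ⟨A₀, hA₀L, hA₀⟩ := h
    have hA₀1 : (∑ i, A₀ i * B i) = 1 := by
      have : ∀ x : ZMod 2, x ≠ 0 → x = 1 := by decide
      exact this _ hA₀
    have hself : ∀ x : ZMod 2, x + x = 0 := by decide
    have hAA : A₀ + A₀ = 0 := by funext j; exact hself (A₀ j)
    have key : ∑ A ∈ univ.filter (fun A => A ∈ L), chi (∑ i, A i * B i)
        = - ∑ A ∈ univ.filter (fun A => A ∈ L), chi (∑ i, A i * B i) := by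
      rw [← Finset.sum_neg_distrib]
      apply Finset.sum_nbij' (fun A => A + A₀) (fun A => A + A₀)
      · intro A hA
        simp only [mem_filter, mem_univ, true_and] at hA ⊢
        exact L.add_mem hA hA₀L
      · intro A hA
        simp only [mem_filter, mem_univ, true_and] at hA ⊢
        exact L.add_mem hA hA₀L
      · intro A _
        rw [add_assoc, hAA, add_zero]
      · intro A _
        rw [add_assoc, hAA, add_zero]
      · intro A _
        have : (∑ i, (A + A₀) i * B i) = (∑ i, A i * B i) + ∑ i, A₀ i * B i := by
          rw [← Finset.sum_add_distrib]
          exact Finset.sum_congr rfl (fun i _ => by simp [add_mul])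
        rw [this, chi_add, hA₀1, chi_one]
        ring
    linear_combination (1/2 : ℂ) * key


open scoped Classical in
/-- **Real-time generalized Wegner duality** (Eq. (Wegner2)): the real-time partition
function of the perpendicular-complement model `L^⊥` of a subspace `L ⊆ 𝔽₂ⁿ` equals
`(1/|L|)(2 e^{−it/2})ⁿ Σ_{A∈L} cos^{n−‖A‖}(t/2) (i sin)^{‖A‖}(t/2)`. -/
theorem real_time_wegner_duality {n : ℕ}
    (L : Submodule (ZMod 2) (Fin n → ZMod 2)) (t : ℝ) :
    ∑ B ∈ Finset.univ.filter (fun B : Fin n → ZMod 2 => ∀ A ∈ L, ∑ i, A i * B i = 0),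
        Complex.exp (-Complex.I * t * (wt B : ℂ))
      = (1 / (Nat.card L : ℂ)) * (2 * Complex.exp (-Complex.I * t / 2)) ^ n *
          ∑ A ∈ Finset.univ.filter (fun A => A ∈ L),
            (Real.cos (t / 2) : ℂ) ^ (n - wt A) *
              (Complex.I * (Real.sin (t / 2) : ℂ)) ^ wt A := by
  have hE : ∀ B : Fin n → ZMod 2,
      Complex.exp (-Complex.I * t * (wt B : ℂ)) = Complex.exp (-Complex.I * t) ^ (wt B) := by
    intro B
    rw [show -Complex.I * t * (wt B : ℂ) = (wt B : ℂ) * (-Complex.I * t) from by ring,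
      Complex.exp_nat_mul]
  have hdouble : ∑ A ∈ univ.filter (fun A => A ∈ L), ∑ B : Fin n → ZMod 2,
        chi (∑ i, A i * B i) * Complex.exp (-Complex.I * t) ^ wt B
      = (Nat.card L : ℂ) * ∑ B ∈ univ.filter (fun B : Fin n → ZMod 2 => ∀ A ∈ L, ∑ i, A i * B i = 0),
          Complex.exp (-Complex.I * t) ^ wt B := by
    rw [Finset.sum_comm]
    calc ∑ B : Fin n → ZMod 2, ∑ A ∈ univ.filter (fun A => A ∈ L),
            chi (∑ i, A i * B i) * Complex.exp (-Complex.I * t) ^ wt B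
        = ∑ B : Fin n → ZMod 2,
            (if (∀ A ∈ L, ∑ i, A i * B i = 0) then (Nat.card L : ℂ) else 0) *
              Complex.exp (-Complex.I * t) ^ wt B := by
          refine Finset.sum_congr rfl fun B _ => ?_
          rw [← Finset.sum_mul, char_orth]
      _ = ∑ B ∈ univ.filter (fun B : Fin n → ZMod 2 => ∀ A ∈ L, ∑ i, A i * B i = 0),
            (Nat.card L : ℂ) * Complex.exp (-Complex.I * t) ^ wt B := by
          rw [Finset.sum_filter]
          refine Finset.sum_congr rfl fun B _ => ?_
          rw [ite_mul, zero_mul]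
      _ = _ := by rw [Finset.mul_sum]
  have hdual : ∑ A ∈ univ.filter (fun A => A ∈ L), ∑ B : Fin n → ZMod 2,
        chi (∑ i, A i * B i) * Complex.exp (-Complex.I * t) ^ wt B
      = (2 * Complex.exp (-Complex.I * t / 2)) ^ n *
          ∑ A ∈ univ.filter (fun A => A ∈ L),
            (Real.cos (t / 2) : ℂ) ^ (n - wt A) * (Complex.I * (Real.sin (t / 2) : ℂ)) ^ wt A := by
    rw [Finset.sum_congr rfl fun A _ => innerSumEval A t, ← Finset.mul_sum]
  have hN : (Nat.card L : ℂ) ≠ 0 := by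
    have : 0 < Nat.card L := Nat.card_pos
    exact_mod_cast this.ne'
  have hLHS : ∑ B ∈ univ.filter (fun B : Fin n → ZMod 2 => ∀ A ∈ L, ∑ i, A i * B i = 0),
        Complex.exp (-Complex.I * t * (wt B : ℂ))
      = ∑ B ∈ univ.filter (fun B : Fin n → ZMod 2 => ∀ A ∈ L, ∑ i, A i * B i = 0),
          Complex.exp (-Complex.I * t) ^ wt B :=
    Finset.sum_congr rfl fun B _ => hE B
  rw [hLHS]
  have key := hdouble.symm.trans hdual
  rw [mul_assoc, ← key, one_div, inv_mul_cancel_left₀ hN]
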